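/- Let X be a Banach lattice with order continuous norm. If every sequence x_n with |x_n| weakly converging to 0 and |x_n| ∧ u →o 0 for all u ≥ 0 satisfies ‖x_n‖ → 0, then X is a KB-space. -/

import Mathlib

set_option linter.unusedSectionVars false
set_option maxHeartbeats 1000000

open Filter Set

section ODual

variable (E : Type*) [AddCommGroup E] [Preorder E] [Module ℝ E]

/-- The order (bounded) dual: linear functionals bounded on order intervals. -/
noncomputable def obDual : Submodule ℝ (E →ₗ[ℝ] ℝ) where
  carrier := {f | ∀ w : E, ∃ M : ℝ, ∀ x : E, -w ≤ x → x ≤ w → |f x| ≤ M}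
  zero_mem' := fun w => ⟨0, fun x _ _ => by simp⟩
  add_mem' := fun {f g} hf hg w => by
    obtain ⟨M, hM⟩ := hf w
    obtain ⟨N, hN⟩ := hg w
    refine ⟨M + N, fun x h1 h2 => ?_⟩
    calc |(f + g) x| = |f x + g x| := by simp
    _ ≤ |f x| + |g x| := abs_add_le _ _
    _ ≤ M + N := add_le_add (hM x h1 h2) (hN x h1 h2)
  smul_mem' := fun c f hf => by
    intro w
    obtain ⟨M, hM⟩ := hf w
    refine ⟨|c| * M, fun x h1 h2 => ?_⟩
    calc |(c • f) x| = |c| * |f x| := by simp [abs_mul]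
    _ ≤ |c| * M := mul_le_mul_of_nonneg_left (hM x h1 h2) (abs_nonneg c)

/-- The pointwise-on-positive-elements (pre)order on a space of functionals. -/
instance instSubPre (Y : Submodule ℝ (E →ₗ[ℝ] ℝ)) : Preorder Y where
  le f g := ∀ x : E, 0 ≤ x → (f : E →ₗ[ℝ] ℝ) x ≤ (g : E →ₗ[ℝ] ℝ) x
  le_refl f x _ := le_rfl
  le_trans f g h h1 h2 x hx := (h1 x hx).trans (h2 x hx)

variable {E}

theorem subPre_le_iff {Y : Submodule ℝ (E →ₗ[ℝ] ℝ)} {f g : Y} :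
    f ≤ g ↔ ∀ x : E, 0 ≤ x → (f : E →ₗ[ℝ] ℝ) x ≤ (g : E →ₗ[ℝ] ℝ) x := Iff.rfl

/-- Order convergence of a net to a limit (sandwich form: eventually
`l - d ≤ x_α ≤ l + d` for every `d` in a set directed downward to `0`). -/
def OConvTo {ι : Type*} [Preorder ι] (x : ι → E) (l : E) : Prop :=
  ∃ D : Set E, D.Nonempty ∧ DirectedOn (· ≥ ·) D ∧ IsGLB D 0 ∧
    ∀ d ∈ D, ∃ α₀ : ι, ∀ α, α₀ ≤ α → l - d ≤ x α ∧ x α ≤ l + d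

/-- Order continuity of a linear functional: `f(x_α) → 0` whenever `x_α ↓ 0`. -/
def OrdContE (f : E →ₗ[ℝ] ℝ) : Prop :=
  ∀ D : Set E, D.Nonempty → DirectedOn (· ≥ ·) D → IsGLB D 0 →
    ∀ ε : ℝ, 0 < ε → ∃ d ∈ D, ∀ e ∈ D, e ≤ d → |f e| < ε

end ODual

section VL

variable (X : Type*) [Lattice X] [AddCommGroup X]
  [CovariantClass X X (· + ·) (· ≤ ·)] [Module ℝ X] [PosSMulMono ℝ X]

variable {X} in
/-- Unbounded order convergence: `|x_α - l| ⊓ u →o 0` for every `u ≥ 0`. -/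
def uoConvTo {ι : Type*} [Preorder ι] (x : ι → X) (l : X) : Prop :=
  ∀ u : X, 0 ≤ u → OConvTo (fun α => |x α - l| ⊓ u) (0 : X)

/-- The canonical evaluation of `x ∈ X` on a space `Y` of functionals on `X`. -/
def hatFun (Y : Submodule ℝ (X →ₗ[ℝ] ℝ)) (x : X) : Y →ₗ[ℝ] ℝ where
  toFun f := (f : X →ₗ[ℝ] ℝ) x
  map_add' f g := by simp
  map_smul' c f := by simp

theorem hatFun_mem (Y : Submodule ℝ (X →ₗ[ℝ] ℝ)) (x : X) :
    hatFun X Y x ∈ obDual Y := by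
  intro w
  refine ⟨(w : X →ₗ[ℝ] ℝ) (x⁺) + (w : X →ₗ[ℝ] ℝ) (x⁻), fun f h1 h2 => ?_⟩
  have hp : (0 : X) ≤ x⁺ := posPart_nonneg x
  have hn : (0 : X) ≤ x⁻ := negPart_nonneg x
  have e1 := (subPre_le_iff.mp h1) _ hp
  have e2 := (subPre_le_iff.mp h2) _ hp
  have e3 := (subPre_le_iff.mp h1) _ hn
  have e4 := (subPre_le_iff.mp h2) _ hn
  have c1 : -((w : X →ₗ[ℝ] ℝ) (x⁺)) ≤ (f : X →ₗ[ℝ] ℝ) (x⁺) := by simpa using e1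
  have c3 : -((w : X →ₗ[ℝ] ℝ) (x⁻)) ≤ (f : X →ₗ[ℝ] ℝ) (x⁻) := by simpa using e3
  have key : (f : X →ₗ[ℝ] ℝ) x
      = (f : X →ₗ[ℝ] ℝ) (x⁺) - (f : X →ₗ[ℝ] ℝ) (x⁻) := by
    rw [← map_sub, posPart_sub_negPart]
  show |(f : X →ₗ[ℝ] ℝ) x| ≤ _
  rw [key]
  have a1 : |(f : X →ₗ[ℝ] ℝ) (x⁺)| ≤ (w : X →ₗ[ℝ] ℝ) (x⁺) := abs_le.mpr ⟨c1, e2⟩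
  have a2 : |(f : X →ₗ[ℝ] ℝ) (x⁻)| ≤ (w : X →ₗ[ℝ] ℝ) (x⁻) := abs_le.mpr ⟨c3, e4⟩
  have := abs_sub ((f : X →ₗ[ℝ] ℝ) (x⁺)) ((f : X →ₗ[ℝ] ℝ) (x⁻))
  linarith

/-- The canonical embedding of `X` into the order dual of `Y ⊆ X~`. -/
def hatEl (Y : Submodule ℝ (X →ₗ[ℝ] ℝ)) (x : X) : obDual Y :=
  ⟨hatFun X Y x, hatFun_mem X Y x⟩

/-- The pointwise order on `X~~` (the instance `instSubPre`, supplied explicitly since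
instance search no longer finds it here). -/
noncomputable instance instBidualPre : Preorder ↥(obDual ↥(obDual X)) :=
  @instSubPre (↥(obDual X)) _ _ _ (obDual ↥(obDual X))

/-- `X~` separates the points of `X`. -/
def SepPoints : Prop := ∀ x : X, x ≠ 0 → ∃ f : obDual X, (f : X →ₗ[ℝ] ℝ) x ≠ 0

/-- The canonical image of `X` in `X~~` is a regular sublattice:
`x_α ↓ 0` in `X` implies `x̂_α ↓ 0` in `X~~`. -/
def HatRegular : Prop :=
  ∀ D : Set X, D.Nonempty → DirectedOn (· ≥ ·) D → IsGLB D 0 →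
    IsGLB (hatEl X (obDual X) '' D) (0 : obDual ↥(obDual X))

variable {X} in
/-- The net `x̂_α` is eventually order bounded in `X~~`. -/
def HatEvOB {ι : Type*} [Preorder ι] (x : ι → X) : Prop :=
  ∃ (b t : obDual ↥(obDual X)) (α₀ : ι), ∀ α, α₀ ≤ α →
    b ≤ hatEl X (obDual X) (x α) ∧ hatEl X (obDual X) (x α) ≤ t

variable {X} in
/-- Bidual bounded uo-convergence. -/
def bbuoConvTo {ι : Type*} [Preorder ι] (x : ι → X) (l : X) : Prop :=
  uoConvTo x l ∧ HatEvOB x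

/-- `X` has the `b`-property: every subset of `X` whose canonical image is
order bounded in `X~~` is order bounded in `X`. -/
def HasBProp : Prop :=
  ∀ A : Set X,
    (∃ b t : obDual ↥(obDual X), ∀ a ∈ A,
        b ≤ hatEl X (obDual X) a ∧ hatEl X (obDual X) a ≤ t) →
    ∃ b t : X, ∀ a ∈ A, b ≤ a ∧ a ≤ t

/-- The Archimedean property for a lattice-ordered group. -/
def IsArch : Prop := ∀ x y : X, 0 ≤ x → (∀ n : ℕ, n • x ≤ y) → x = 0

end VL


section Banach

variable (X : Type u) [NormedAddCommGroup X] [Lattice X] [HasSolidNorm X]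
  [IsOrderedAddMonoid X] [NormedSpace ℝ X]

/-- The norm of `X` is order continuous: `x_α ↓ 0` implies `‖x_α‖ → 0`. -/
def OrderContNorm : Prop :=
  ∀ D : Set X, D.Nonempty → DirectedOn (· ≥ ·) D → IsGLB D 0 →
    ∀ ε : ℝ, 0 < ε → ∃ d ∈ D, ∀ e ∈ D, e ≤ d → ‖e‖ < ε

/-- `X` is a KB-space: every norm bounded increasing net in `X₊` is norm
convergent. -/
def IsKB : Prop :=
  ∀ D : Set X, D.Nonempty → DirectedOn (· ≤ ·) D → (∀ d ∈ D, 0 ≤ d) →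
    (∃ M : ℝ, ∀ d ∈ D, ‖d‖ ≤ M) →
    ∃ x : X, ∀ ε : ℝ, 0 < ε → ∃ d ∈ D, ∀ e ∈ D, d ≤ e → ‖e - x‖ < ε

end Banach

section MyAux

open Filter

variable {X : Type u} [NormedAddCommGroup X] [Lattice X] [HasSolidNorm X]
  [IsOrderedAddMonoid X] [NormedSpace ℝ X]

lemma myRiesz (a b c : X) (ha : 0 ≤ a) (hb : 0 ≤ b) (hc : 0 ≤ c) :
    a ⊓ (b + c) ≤ a ⊓ b + a ⊓ c := by
  rw [← sub_le_iff_le_add', sub_inf]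
  refine sup_le ?_ ?_
  · exact (sub_nonpos.mpr inf_le_left).trans (le_inf ha hc)
  · refine le_inf ((sub_le_self _ hb).trans inf_le_left) ?_
    exact sub_le_iff_le_add.mpr (inf_le_right.trans (le_of_eq (add_comm b c)))

lemma myNormNsmul (k : ℕ) (c : X) : ‖k • c‖ = (k : ℝ) * ‖c‖ := by
  rw [← Nat.cast_smul_eq_nsmul ℝ, norm_smul]; simp

/-- Lemma A: a monotone sequence bounded above converges in norm to an upper bound. -/
lemma lemA [CompleteSpace X] (hocn : OrderContNorm X) (a : ℕ → X) (b : X)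
    (mono : Monotone a) (hb : ∀ n, a n ≤ b) :
    ∃ L : X, Tendsto a atTop (nhds L) ∧ ∀ n, a n ≤ L := by
  classical
  set U : Set X := {y | ∀ n, a n ≤ y} with hU
  set D : Set X := {z | ∃ y ∈ U, ∃ n, z = y - a n} with hD
  have hbU : b ∈ U := hb
  have hne : D.Nonempty := ⟨b - a 0, b, hbU, 0, rfl⟩
  have hdir : DirectedOn (· ≥ ·) D := by
    rintro _ ⟨y₁, hy₁, n₁, rfl⟩ _ ⟨y₂, hy₂, n₂, rfl⟩
    refine ⟨(y₁ ⊓ y₂) - a (max n₁ n₂),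
      ⟨y₁ ⊓ y₂, fun n => le_inf (hy₁ n) (hy₂ n), _, rfl⟩, ?_, ?_⟩
    · exact sub_le_sub inf_le_left (mono (le_max_left _ _))
    · exact sub_le_sub inf_le_right (mono (le_max_right _ _))
  have hglb : IsGLB D 0 := by
    constructor
    · rintro _ ⟨y, hy, n, rfl⟩
      exact sub_nonneg.mpr (hy n)
    · intro c hc
      have key : ∀ y ∈ U, ∀ k : ℕ, (y - k • c⁺) ∈ U := by
        intro y hy k
        induction k with
        | zero => simpa using hy
        | succ k ih =>
          intro n
          have h1 : c ≤ (y - k • c⁺) - a n := hc ⟨y - k • c⁺, ih, n, rfl⟩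
          have h2 : a n ≤ y - k • c⁺ := ih n
          have h3 : a n + c⁺ ≤ y - k • c⁺ := by
            rw [posPart_def, add_sup, add_zero]
            exact sup_le (by rw [add_comm]; exact le_sub_iff_add_le.mp h1) h2
          rw [succ_nsmul, ← sub_sub]
          exact le_sub_iff_add_le.mpr h3
      have arch : ∀ k : ℕ, k • c⁺ ≤ b - a 0 := fun k => by
        have := key b hbU k 0
        exact le_sub_iff_add_le.mpr (by rw [add_comm]; exact le_sub_iff_add_le.mp this)
      have hnorm : ∀ k : ℕ, (k : ℝ) * ‖c⁺‖ ≤ ‖b - a 0‖ := by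
        intro k
        have h0 : (0 : X) ≤ k • c⁺ := nsmul_nonneg (posPart_nonneg c) k
        have habs : |k • c⁺| ≤ |b - a 0| := by
          rw [abs_of_nonneg h0, abs_of_nonneg (h0.trans (arch k))]
          exact arch k
        have := norm_le_norm_of_abs_le_abs habs
        rwa [myNormNsmul] at this
      have hcp : ‖c⁺‖ ≤ 0 := by
        by_contra h'
        push_neg at h'
        obtain ⟨k, hk⟩ := exists_nat_gt (‖b - a 0‖ / ‖c⁺‖)
        have := hnorm k
        rw [div_lt_iff₀ h'] at hk
        linarith
      have : c⁺ = 0 := norm_eq_zero.mp (le_antisymm hcp (norm_nonneg _))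
      exact posPart_eq_zero.mp this
  have cauchy : CauchySeq a := by
    rw [Metric.cauchySeq_iff']
    intro ε hε
    obtain ⟨d, hdD, hd⟩ := hocn D hne hdir hglb (ε / 2) (by positivity)
    obtain ⟨y₀, hy₀, n₀, rfl⟩ := hdD
    refine ⟨n₀, fun m hm => ?_⟩
    have km : ‖y₀ - a m‖ < ε / 2 :=
      hd _ ⟨y₀, hy₀, m, rfl⟩ (sub_le_sub_left (mono hm) y₀)
    have kn : ‖y₀ - a n₀‖ < ε / 2 := hd _ ⟨y₀, hy₀, n₀, rfl⟩ le_rfl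
    have : dist (a m) (a n₀) ≤ ‖y₀ - a m‖ + ‖y₀ - a n₀‖ := by
      rw [dist_eq_norm]
      calc ‖a m - a n₀‖ = ‖(y₀ - a n₀) - (y₀ - a m)‖ := by abel_nf
        _ ≤ ‖y₀ - a n₀‖ + ‖y₀ - a m‖ := norm_sub_le _ _
        _ = ‖y₀ - a m‖ + ‖y₀ - a n₀‖ := by ring
    linarith
  obtain ⟨L, hL⟩ := cauchySeq_tendsto_of_complete cauchy
  refine ⟨L, hL, fun n => ?_⟩
  exact ge_of_tendsto hL (Filter.eventually_atTop.mpr ⟨n, fun m hm => mono hm⟩)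



lemma myInfSupSum (w : X) (hw : 0 ≤ w) (g : ℕ → X) :
    ∀ (s : Finset ℕ) (hs : s.Nonempty), (∀ i ∈ s, 0 ≤ g i) →
      w ⊓ s.sup' hs g ≤ ∑ i ∈ s, (w ⊓ g i) := by
  intro s hs
  induction hs using Finset.Nonempty.cons_induction with
  | singleton a => intro _; simp
  | cons a s ha hs ih =>
    intro hg
    rw [Finset.sup'_cons hs, Finset.sum_cons]
    have hga : 0 ≤ g a := hg a (Finset.mem_cons_self a s)
    have hS : 0 ≤ s.sup' hs g := by
      obtain ⟨i, hi⟩ := hs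
      exact (hg i (Finset.mem_cons_of_mem hi)).trans (Finset.le_sup' g hi)
    calc w ⊓ (g a ⊔ s.sup' hs g) ≤ w ⊓ (g a + s.sup' hs g) :=
          inf_le_inf_left w (sup_le (le_add_of_nonneg_right hS) (le_add_of_nonneg_left hga))
      _ ≤ w ⊓ g a + w ⊓ s.sup' hs g := myRiesz w _ _ hw hga hS
      _ ≤ w ⊓ g a + ∑ i ∈ s, (w ⊓ g i) :=
          add_le_add_right (ih (fun i hi => hg i (Finset.mem_cons_of_mem hi))) _

lemma uoNullIncrements [CompleteSpace X] (hocn : OrderContNorm X)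
    (a : ℕ → X) (mono : Monotone a) (M : ℝ) (hM : ∀ n, ‖a n‖ ≤ M)
    (u : X) (hu : 0 ≤ u) :
    OConvTo (fun n => |a (n + 1) - a n| ⊓ u) (0 : X) := by
  classical
  set x : ℕ → X := fun n => a (n + 1) - a n with hxdef
  have hx : ∀ n, 0 ≤ x n := fun n => sub_nonneg.mpr (mono (Nat.le_succ n))
  set y : ℕ → X := fun n => |a (n + 1) - a n| ⊓ u with hydef
  have hyeq : ∀ n, y n = x n ⊓ u := fun n => by
    simp only [hydef, hxdef, abs_of_nonneg (show (0:X) ≤ a (n + 1) - a n from hx n)]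
  have hy0 : ∀ n, 0 ≤ y n := fun n => (hyeq n) ▸ le_inf (hx n) hu
  have hyu : ∀ n, y n ≤ u := fun n => (hyeq n) ▸ inf_le_right
  have hyx : ∀ n, y n ≤ x n := fun n => (hyeq n) ▸ inf_le_left
  have hIccNe : ∀ N K : ℕ, (Finset.Icc N (N + K)).Nonempty :=
    fun N K => ⟨N, Finset.mem_Icc.mpr ⟨le_rfl, Nat.le_add_right _ _⟩⟩
  set P : ℕ → ℕ → X := fun N K => (Finset.Icc N (N + K)).sup' (hIccNe N K) y with hPdef
  have hPy : ∀ N K k, N ≤ k → k ≤ N + K → y k ≤ P N K := fun N K k h1 h2 =>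
    Finset.le_sup' y (Finset.mem_Icc.mpr ⟨h1, h2⟩)
  have hPu : ∀ N K, P N K ≤ u := fun N K => Finset.sup'_le _ _ fun i _ => hyu i
  have hPmono : ∀ N, Monotone (P N) := by
    intro N K1 K2 hK
    exact Finset.sup'_mono y (Finset.Icc_subset_Icc_right (by omega)) _
  have hz : ∀ N, ∃ L, Filter.Tendsto (P N) Filter.atTop (nhds L) ∧ ∀ K, P N K ≤ L :=
    fun N => lemA hocn (P N) u (hPmono N) (hPu N)
  choose z hzt hzub using hz
  have hyz : ∀ N k, N ≤ k → y k ≤ z N := by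
    intro N k hk
    exact (hPy N (k - N) k hk (by omega)).trans (hzub N (k - N))
  have hz0 : ∀ N, 0 ≤ z N := fun N => (hy0 N).trans (hyz N N le_rfl)
  have hzanti : Antitone z := by
    apply antitone_nat_of_succ_le
    intro N
    apply le_of_tendsto (hzt (N + 1))
    filter_upwards with K
    have hPP : P (N + 1) K ≤ P N (K + 1) :=
      Finset.sup'_le _ _ fun i hi => by
        rw [Finset.mem_Icc] at hi
        exact hPy N (K + 1) i (by omega) (by omega)
    exact hPP.trans (hzub N (K + 1))
  obtain ⟨L, hLt, _⟩ := lemA hocn (fun N => z 0 - z N) (z 0)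
    (fun N N' hNN => sub_le_sub_left (hzanti hNN) _)
    (fun N => sub_le_self _ (hz0 N))
  have hzt' : Filter.Tendsto z Filter.atTop (nhds (z 0 - L)) := by
    have h := (tendsto_const_nhds :
      Filter.Tendsto (fun _ : ℕ => z 0) Filter.atTop (nhds (z 0))).sub hLt
    simpa [sub_sub_cancel] using h
  set w := z 0 - L with hwdef
  have hwz : ∀ N, w ≤ z N := fun N =>
    le_of_tendsto hzt' (Filter.eventually_atTop.mpr ⟨N, fun m hm => hzanti hm⟩)
  have hw0 : 0 ≤ w := ge_of_tendsto hzt' (Filter.eventually_atTop.mpr ⟨0, fun m _ => hz0 m⟩)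
  have block : ∀ δ : ℝ, 0 < δ → ∀ N : ℕ, ∃ K : ℕ, ∃ e : X, 0 ≤ e ∧ ‖e‖ ≤ δ ∧
      w ≤ (∑ k ∈ Finset.Ico N (N + K + 1), (w ⊓ x k)) + e := by
    intro δ hδ N
    have ht0 : Filter.Tendsto (fun K => z N - P N K) Filter.atTop (nhds 0) := by
      have h := (tendsto_const_nhds :
        Filter.Tendsto (fun _ : ℕ => z N) Filter.atTop (nhds (z N))).sub (hzt N)
      simpa using h
    obtain ⟨K0, hK0⟩ := (Metric.tendsto_atTop.mp ht0) δ hδ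
    have hKnorm : ‖z N - P N K0‖ < δ := by
      have := hK0 K0 le_rfl
      rwa [dist_zero_right] at this
    refine ⟨K0, z N - P N K0, sub_nonneg.mpr (hzub N K0), hKnorm.le, ?_⟩
    have h3 : ∀ p e' : X, 0 ≤ e' → w ⊓ (p + e') ≤ w ⊓ p + e' := by
      intro p e' he'
      calc w ⊓ (p + e') ≤ (w + e') ⊓ (p + e') :=
            inf_le_inf_right _ (le_add_of_nonneg_right he')
        _ = w ⊓ p + e' := (inf_add w p e').symm
    calc w = w ⊓ z N := (inf_eq_left.mpr (hwz N)).symm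
      _ = w ⊓ (P N K0 + (z N - P N K0)) := by rw [add_sub_cancel]
      _ ≤ w ⊓ P N K0 + (z N - P N K0) := h3 _ _ (sub_nonneg.mpr (hzub N K0))
      _ ≤ (∑ k ∈ Finset.Icc N (N + K0), (w ⊓ y k)) + (z N - P N K0) :=
          add_le_add_left (myInfSupSum w hw0 y _ _ (fun i _ => hy0 i)) _
      _ ≤ (∑ k ∈ Finset.Icc N (N + K0), (w ⊓ x k)) + (z N - P N K0) :=
          add_le_add_left (Finset.sum_le_sum fun i _ => inf_le_inf_left w (hyx i)) _
      _ = (∑ k ∈ Finset.Ico N (N + K0 + 1), (w ⊓ x k)) + (z N - P N K0) := by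
          rw [Finset.Ico_add_one_right_eq_Icc]
  have hM0 : 0 ≤ M := (norm_nonneg (a 0)).trans (hM 0)
  have wzero : w = 0 := by
    have bound : ∀ r : ℕ, 0 < r → (r : ℝ) * ‖w‖ ≤ 2 * M + 1 := by
      intro r hr
      have hδ : (0 : ℝ) < 1 / r := by positivity
      choose K e he0 heδ hineq using block (1 / r) hδ
      set g : ℕ → ℕ := fun i => Nat.rec 0 (fun j gj => gj + K gj + 1) i with hgdef
      have hgs : ∀ i, g (i + 1) = g i + K (g i) + 1 := fun i => rfl
      have hgmono : Monotone g := monotone_nat_of_le_succ (fun i => by rw [hgs]; omega)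
      have chain : ∀ r' : ℕ, r' • w ≤
          (∑ k ∈ Finset.Ico 0 (g r'), (w ⊓ x k)) + ∑ i ∈ Finset.range r', e (g i) := by
        intro r'
        induction r' with
        | zero => rw [show g 0 = 0 from rfl]; simp
        | succ r' ih =>
          rw [succ_nsmul]
          calc r' • w + w ≤
              ((∑ k ∈ Finset.Ico 0 (g r'), (w ⊓ x k)) + ∑ i ∈ Finset.range r', e (g i)) +
                ((∑ k ∈ Finset.Ico (g r') (g r' + K (g r') + 1), (w ⊓ x k)) + e (g r')) :=
              add_le_add ih (hineq (g r'))
            _ = ((∑ k ∈ Finset.Ico 0 (g r'), (w ⊓ x k)) +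
                  (∑ k ∈ Finset.Ico (g r') (g (r' + 1)), (w ⊓ x k))) +
                (∑ i ∈ Finset.range r', e (g i) + e (g r')) := by rw [hgs]; abel
            _ = (∑ k ∈ Finset.Ico 0 (g (r' + 1)), (w ⊓ x k)) +
                ∑ i ∈ Finset.range (r' + 1), e (g i) := by
                rw [Finset.sum_Ico_consecutive _ (Nat.zero_le _) (hgmono (Nat.le_succ r')),
                  Finset.sum_range_succ]
      have h1 := chain r
      set S := ∑ k ∈ Finset.Ico 0 (g r), (w ⊓ x k) with hSdef
      set E := ∑ i ∈ Finset.range r, e (g i) with hEdef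
      have hSpos : 0 ≤ S := Finset.sum_nonneg fun i _ => le_inf hw0 (hx i)
      have hEpos : 0 ≤ E := Finset.sum_nonneg fun i _ => he0 (g i)
      have hSle : S ≤ a (g r) - a 0 := by
        calc S ≤ ∑ k ∈ Finset.Ico 0 (g r), x k := Finset.sum_le_sum fun i _ => inf_le_right
          _ = ∑ k ∈ Finset.range (g r), (a (k + 1) - a k) := by rw [← Finset.range_eq_Ico]
          _ = a (g r) - a 0 := Finset.sum_range_sub (fun i => a i) (g r)
      have hSnorm : ‖S‖ ≤ 2 * M := by
        have habs : |S| ≤ |a (g r) - a 0| := by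
          rw [abs_of_nonneg hSpos, abs_of_nonneg (hSpos.trans hSle)]
          exact hSle
        refine (norm_le_norm_of_abs_le_abs habs).trans ?_
        calc ‖a (g r) - a 0‖ ≤ ‖a (g r)‖ + ‖a 0‖ := norm_sub_le _ _
          _ ≤ 2 * M := by have := hM (g r); have := hM 0; linarith
      have hEnorm : ‖E‖ ≤ 1 := by
        calc ‖E‖ ≤ ∑ i ∈ Finset.range r, ‖e (g i)‖ := norm_sum_le _ _
          _ ≤ ∑ i ∈ Finset.range r, (1 / r : ℝ) := Finset.sum_le_sum fun i _ => heδ (g i)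
          _ = r * (1 / r : ℝ) := by
              rw [Finset.sum_const, Finset.card_range, nsmul_eq_mul]
          _ = 1 := by field_simp
      have hrw : ‖r • w‖ ≤ ‖S + E‖ := by
        apply norm_le_norm_of_abs_le_abs
        rw [abs_of_nonneg (nsmul_nonneg hw0 r), abs_of_nonneg (add_nonneg hSpos hEpos)]
        exact h1
      rw [myNormNsmul] at hrw
      calc (r : ℝ) * ‖w‖ ≤ ‖S + E‖ := hrw
        _ ≤ ‖S‖ + ‖E‖ := norm_add_le _ _
        _ ≤ 2 * M + 1 := by linarith
    have hwn : ‖w‖ ≤ 0 := by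
      by_contra h'
      push_neg at h'
      obtain ⟨r, hr⟩ := exists_nat_gt ((2 * M + 1) / ‖w‖)
      have hrpos : 0 < r := by
        have : (0 : ℝ) < (2 * M + 1) / ‖w‖ := by positivity
        exact_mod_cast Nat.cast_pos.mp (this.trans hr)
      have hb := bound r hrpos
      rw [div_lt_iff₀ h'] at hr
      linarith
    exact norm_eq_zero.mp (le_antisymm hwn (norm_nonneg _))
  have hzt0 : Filter.Tendsto z Filter.atTop (nhds 0) := by
    rw [← wzero]; exact hzt'
  refine ⟨Set.range z, ⟨z 0, 0, rfl⟩, ?_, ?_, ?_⟩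
  · rintro _ ⟨N, rfl⟩ _ ⟨N', rfl⟩
    exact ⟨z (max N N'), ⟨max N N', rfl⟩, hzanti (le_max_left _ _),
      hzanti (le_max_right _ _)⟩
  · constructor
    · rintro _ ⟨N, rfl⟩
      exact hz0 N
    · intro c hc
      exact ge_of_tendsto hzt0 (Filter.eventually_atTop.mpr ⟨0, fun m _ => hc ⟨m, rfl⟩⟩)
  · rintro _ ⟨N, rfl⟩
    refine ⟨N, fun n hn => ⟨?_, ?_⟩⟩
    · calc (0 : X) - z N ≤ 0 := by simpa using hz0 N
        _ ≤ y n := hy0 n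
    · simpa using hyz N n hn

lemma myWeakNull (a : ℕ → X) (mono : Monotone a) (M : ℝ) (hM : ∀ n, ‖a n‖ ≤ M)
    (f : X →L[ℝ] ℝ) :
    Filter.Tendsto (fun n => f |a (n + 1) - a n|) Filter.atTop (nhds 0) := by
  classical
  set x : ℕ → X := fun n => a (n + 1) - a n with hxdef
  have hx : ∀ n, 0 ≤ x n := fun n => sub_nonneg.mpr (mono (Nat.le_succ n))
  set p : (X →L[ℝ] ℝ) → X → ℝ := fun g v => sSup (g '' Set.Icc 0 v) with hpdef
  have hne : ∀ (g : X →L[ℝ] ℝ) (v : X), 0 ≤ v → (g '' Set.Icc 0 v).Nonempty :=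
    fun g v hv => ⟨g 0, 0, ⟨le_rfl, hv⟩, rfl⟩
  have hbdd : ∀ (g : X →L[ℝ] ℝ) (v : X), 0 ≤ v → BddAbove (g '' Set.Icc 0 v) := by
    rintro g v hv
    refine ⟨‖g‖ * ‖v‖, ?_⟩
    rintro _ ⟨s, ⟨hs0, hsv⟩, rfl⟩
    have : ‖s‖ ≤ ‖v‖ := norm_le_norm_of_abs_le_abs (by
      rw [abs_of_nonneg hs0, abs_of_nonneg hv]; exact hsv)
    calc g s ≤ |g s| := le_abs_self _
      _ ≤ ‖g‖ * ‖s‖ := by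
          have := g.le_opNorm s
          rwa [Real.norm_eq_abs] at this
      _ ≤ ‖g‖ * ‖v‖ := mul_le_mul_of_nonneg_left this (norm_nonneg g)
  have hp_nonneg : ∀ (g : X →L[ℝ] ℝ) (v : X), 0 ≤ v → 0 ≤ p g v := by
    intro g v hv
    have : g 0 ∈ g '' Set.Icc 0 v := ⟨0, ⟨le_rfl, hv⟩, rfl⟩
    have h := le_csSup (hbdd g v hv) this
    simpa using h
  have hp_le : ∀ (g : X →L[ℝ] ℝ) (v : X), 0 ≤ v → p g v ≤ ‖g‖ * ‖v‖ := by
    intro g v hv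
    refine csSup_le (hne g v hv) ?_
    rintro _ ⟨s, ⟨hs0, hsv⟩, rfl⟩
    have : ‖s‖ ≤ ‖v‖ := norm_le_norm_of_abs_le_abs (by
      rw [abs_of_nonneg hs0, abs_of_nonneg hv]; exact hsv)
    calc g s ≤ |g s| := le_abs_self _
      _ ≤ ‖g‖ * ‖s‖ := by
          have := g.le_opNorm s
          rwa [Real.norm_eq_abs] at this
      _ ≤ ‖g‖ * ‖v‖ := mul_le_mul_of_nonneg_left this (norm_nonneg g)
  have hf_le_p : ∀ (g : X →L[ℝ] ℝ) (v : X), 0 ≤ v → g v ≤ p g v := by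
    intro g v hv
    exact le_csSup (hbdd g v hv) ⟨v, ⟨hv, le_rfl⟩, rfl⟩
  have hsuper : ∀ (g : X →L[ℝ] ℝ) (v v' : X), 0 ≤ v → 0 ≤ v' →
      p g v + p g v' ≤ p g (v + v') := by
    intro g v v' hv hv'
    have hvv' : (0 : X) ≤ v + v' := add_nonneg hv hv'
    rw [← le_sub_iff_add_le]
    refine csSup_le (hne g v hv) ?_
    rintro _ ⟨s, ⟨hs0, hsv⟩, rfl⟩
    rw [le_sub_iff_add_le, add_comm, ← le_sub_iff_add_le]
    refine csSup_le (hne g v' hv') ?_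
    rintro _ ⟨s', ⟨hs0', hsv'⟩, rfl⟩
    rw [le_sub_iff_add_le, ← map_add]
    refine le_csSup (hbdd g _ hvv') ⟨s' + s, ⟨add_nonneg hs0' hs0, ?_⟩, rfl⟩
    exact (add_le_add hsv' hsv).trans (le_of_eq (add_comm v' v))
  -- partial sums of p g (x k) are bounded
  have hpsum : ∀ (g : X →L[ℝ] ℝ) (n : ℕ),
      ∑ k ∈ Finset.range n, p g (x k) ≤ p g (a n - a 0) := by
    intro g n
    induction n with
    | zero => simpa using hp_nonneg g 0 le_rfl
    | succ n ih =>
      rw [Finset.sum_range_succ]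
      have h1 : (0 : X) ≤ a n - a 0 := sub_nonneg.mpr (mono (Nat.zero_le n))
      calc ∑ k ∈ Finset.range n, p g (x k) + p g (x n)
          ≤ p g (a n - a 0) + p g (x n) := add_le_add_left ih _
        _ ≤ p g ((a n - a 0) + x n) := hsuper g _ _ h1 (hx n)
        _ = p g (a (n + 1) - a 0) := by
            congr 1
            simp only [hxdef]
            abel
  have hbound : ∀ (g : X →L[ℝ] ℝ) (n : ℕ),
      ∑ k ∈ Finset.range n, p g (x k) ≤ ‖g‖ * (2 * M) := by
    intro g n
    have h1 : (0 : X) ≤ a n - a 0 := sub_nonneg.mpr (mono (Nat.zero_le n))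
    refine (hpsum g n).trans ((hp_le g _ h1).trans ?_)
    have h2 : ‖a n - a 0‖ ≤ 2 * M := by
      calc ‖a n - a 0‖ ≤ ‖a n‖ + ‖a 0‖ := norm_sub_le _ _
        _ ≤ 2 * M := by have := hM n; have := hM 0; linarith
    exact mul_le_mul_of_nonneg_left h2 (norm_nonneg g)
  have hsummable : ∀ g : X →L[ℝ] ℝ,
      Filter.Tendsto (fun n => p g (x n)) Filter.atTop (nhds 0) := by
    intro g
    have : Summable (fun n => p g (x n)) :=
      summable_of_sum_range_le (fun n => hp_nonneg g (x n) (hx n)) (hbound g)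
    exact this.tendsto_atTop_zero
  have habs : ∀ n, |f (x n)| ≤ p f (x n) + p (-f) (x n) := by
    intro n
    have h1 : f (x n) ≤ p f (x n) := hf_le_p f (x n) (hx n)
    have h2 : -f (x n) ≤ p (-f) (x n) := by
      have := hf_le_p (-f) (x n) (hx n)
      simpa using this
    have h3 := hp_nonneg f (x n) (hx n)
    have h4 := hp_nonneg (-f) (x n) (hx n)
    rw [abs_le]
    constructor <;> linarith
  have hsum0 : Filter.Tendsto (fun n => p f (x n) + p (-f) (x n)) Filter.atTop (nhds 0) := by
    have := (hsummable f).add (hsummable (-f))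
    simpa using this
  have hfx : Filter.Tendsto (fun n => f (x n)) Filter.atTop (nhds 0) :=
    squeeze_zero_norm (fun n => by rw [Real.norm_eq_abs]; exact habs n) hsum0
  have : (fun n => f |a (n + 1) - a n|) = fun n => f (x n) := by
    funext n
    rw [show |a (n + 1) - a n| = x n from by
      simp only [hxdef]; exact abs_of_nonneg (hx n)]
  rw [this]
  exact hfx

end MyAux

/-- If in a Banach lattice with order continuous norm every sequence `x_n` with
`|x_n|` weakly null and `|x_n| ⊓ u →o 0` for all `u ≥ 0` is norm null, then `X`
is a KB-space. -/
theorem statement17 {X : Type u} [NormedAddCommGroup X] [Lattice X] [HasSolidNorm X]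
    [IsOrderedAddMonoid X] [NormedSpace ℝ X]
    [CompleteSpace X] [PosSMulMono ℝ X]
    (hocn : OrderContNorm X)
    (h : ∀ x : ℕ → X,
      (∀ f : X →L[ℝ] ℝ, Filter.Tendsto (fun n => f |x n|) Filter.atTop (nhds 0)) →
      (∀ u : X, 0 ≤ u → OConvTo (fun n => |x n| ⊓ u) 0) →
      Filter.Tendsto (fun n => ‖x n‖) Filter.atTop (nhds 0)) :
    IsKB X := by
  rintro D hDne hDdir hDpos ⟨M, hM⟩
  classical
  by_cases hstar : ∀ ε : ℝ, 0 < ε → ∃ d ∈ D, ∀ e ∈ D, d ≤ e → ‖e - d‖ < ε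
  · -- norm Cauchy case: build the limit
    have hsel : ∀ n : ℕ, ∃ d ∈ D, ∀ e ∈ D, d ≤ e → ‖e - d‖ < (1 / 2 : ℝ) ^ n :=
      fun n => hstar _ (by positivity)
    choose d hdD hdprop using hsel
    have hub : ∀ p q : X, p ∈ D → q ∈ D → ∃ r, r ∈ D ∧ p ≤ r ∧ q ≤ r := by
      intro p q hp hq
      obtain ⟨r, hr, h1, h2⟩ := hDdir p hp q hq
      exact ⟨r, hr, h1, h2⟩
    set F : ℕ → {v : X // v ∈ D} → {v : X // v ∈ D} := fun n v =>
      ⟨(hub v (d (n + 1)) v.2 (hdD (n + 1))).choose,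
        (hub v (d (n + 1)) v.2 (hdD (n + 1))).choose_spec.1⟩ with hF
    set c : ℕ → {v : X // v ∈ D} := fun n => Nat.rec ⟨d 0, hdD 0⟩ F n with hc
    have hcd : ∀ n, d n ≤ (c n : X) := by
      intro n
      cases n with
      | zero => exact le_rfl
      | succ n => exact (hub (c n) (d (n + 1)) (c n).2 (hdD (n + 1))).choose_spec.2.2
    have hcmono : Monotone (fun n => (c n : X)) :=
      monotone_nat_of_le_succ fun n =>
        (hub (c n) (d (n + 1)) (c n).2 (hdD (n + 1))).choose_spec.2.1
    have hkey : ∀ n m, n ≤ m → ‖(c m : X) - d n‖ < (1 / 2 : ℝ) ^ n := fun n m hm =>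
      hdprop n (c m) (c m).2 ((hcd n).trans (hcmono hm))
    have hcauchy : CauchySeq (fun n => (c n : X)) := by
      rw [Metric.cauchySeq_iff']
      intro ε hε
      obtain ⟨N, hN⟩ := exists_pow_lt_of_lt_one (show (0:ℝ) < ε / 2 by positivity)
        (show (1 / 2 : ℝ) < 1 by norm_num)
      refine ⟨N, fun m hm => ?_⟩
      have h1 := hkey N m hm
      have h2 := hkey N N le_rfl
      have : dist ((c m : X)) ((c N : X)) ≤
          ‖(c m : X) - d N‖ + ‖(c N : X) - d N‖ := by
        rw [dist_eq_norm]
        calc ‖(c m : X) - (c N : X)‖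
            = ‖((c m : X) - d N) - ((c N : X) - d N)‖ := by abel_nf
          _ ≤ ‖(c m : X) - d N‖ + ‖(c N : X) - d N‖ := norm_sub_le _ _
      linarith
    obtain ⟨l, hl⟩ := cauchySeq_tendsto_of_complete hcauchy
    refine ⟨l, fun ε hε => ?_⟩
    obtain ⟨N, hN⟩ := exists_pow_lt_of_lt_one (show (0:ℝ) < ε / 2 by positivity)
      (show (1 / 2 : ℝ) < 1 by norm_num)
    refine ⟨(c N : X), (c N).2, fun e he hce => ?_⟩
    have h1 : ‖e - d N‖ < (1 / 2 : ℝ) ^ N := hdprop N e he ((hcd N).trans hce)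
    have h2 : ‖l - d N‖ ≤ (1 / 2 : ℝ) ^ N := by
      have ht : Filter.Tendsto (fun m => ‖(c m : X) - d N‖) Filter.atTop
          (nhds ‖l - d N‖) := (hl.sub tendsto_const_nhds).norm
      exact le_of_tendsto ht
        (Filter.eventually_atTop.mpr ⟨N, fun m hm => (hkey N m hm).le⟩)
    calc ‖e - l‖ = ‖(e - d N) - (l - d N)‖ := by abel_nf
      _ ≤ ‖e - d N‖ + ‖l - d N‖ := norm_sub_le _ _
      _ < ε := by linarith
  · exfalso
    push_neg at hstar
    obtain ⟨ε₀, hε₀, hbad⟩ := hstar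
    set G : {v : X // v ∈ D} → {v : X // v ∈ D} := fun v =>
      ⟨(hbad v v.2).choose, (hbad v v.2).choose_spec.1⟩ with hG
    have hGle : ∀ v : {v : X // v ∈ D}, (v : X) ≤ (G v : X) :=
      fun v => (hbad v v.2).choose_spec.2.1
    have hGnorm : ∀ v : {v : X // v ∈ D}, ε₀ ≤ ‖(G v : X) - (v : X)‖ :=
      fun v => (hbad v v.2).choose_spec.2.2
    set b : ℕ → {v : X // v ∈ D} := fun n => G^[n] ⟨hDne.choose, hDne.choose_spec⟩
      with hb
    have hbs : ∀ n, b (n + 1) = G (b n) := fun n =>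
      Function.iterate_succ_apply' G n _
    set A : ℕ → X := fun n => (b n : X) with hA
    have hAmono : Monotone A := monotone_nat_of_le_succ fun n => by
      rw [hA]
      simp only []
      rw [hbs n]
      exact hGle (b n)
    have hAM : ∀ n, ‖A n‖ ≤ M := fun n => hM _ (b n).2
    have hnull := h (fun n => A (n + 1) - A n)
      (fun f => myWeakNull A hAmono M hAM f)
      (fun u hu => uoNullIncrements hocn A hAmono M hAM u hu)
    have hlow : ∀ n, ε₀ ≤ ‖A (n + 1) - A n‖ := by
      intro n
      have := hGnorm (b n)
      rw [← hbs n] at this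
      exact this
    have hev : ∀ᶠ n in Filter.atTop, ‖A (n + 1) - A n‖ < ε₀ := by
      have := hnull.eventually (gt_mem_nhds hε₀)
      simpa using this
    obtain ⟨n, hn⟩ := hev.exists
    exact absurd (hlow n) (not_le.mpr hn)
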